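/- arXiv:2101.02256 — 6 statements merged into one kernel-verified Lean document; each statement's English description precedes it below -/
import Mathlib

section
/- If $A$ is an $n\times n$ real positive definite matrix with smallest eigenvalue $\lambda_{\min}$, then for every vector $y$ with $\|y\|_\infty = 1$, we have $\|Ay\|_\infty \geq \frac{2\lambda_{\min}}{\sqrt{n}+1}$. -/
open Finset Matrix in
lemma rayleigh_low {n : ℕ} (A : Matrix (Fin n) (Fin n) ℝ) (hA : A.IsHermitian)
    (lam : ℝ) (hle : ∀ i, lam ≤ hA.eigenvalues i) (y : Fin n → ℝ) :
    lam * (∑ i, y i ^ 2) ≤ y ⬝ᵥ A.mulVec y := by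
  classical
  set b := hA.eigenvectorBasis with hb
  set Y : EuclideanSpace ℝ (Fin n) := WithLp.toLp 2 y with hY
  set c : Fin n → ℝ := fun i => b.repr Y i with hc
  have hci : ∀ i, (inner ℝ (Y) ((b i : EuclideanSpace ℝ (Fin n))) : ℝ) = c i := by
    intro i
    rw [real_inner_comm, ← b.repr_apply_apply]
  have hrepr : ∑ i, c i • (b i : EuclideanSpace ℝ (Fin n)) = Y := b.sum_repr Y
  have hinner : ∀ z : EuclideanSpace ℝ (Fin n), (inner ℝ (Y) (z) : ℝ) = y ⬝ᵥ (z : Fin n → ℝ) := by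
    intro z
    simp [hY, PiLp.inner_apply, dotProduct, RCLike.inner_apply, mul_comm]
  have hnorm : ∑ i, y i ^ 2 = ∑ i, c i ^ 2 := by
    have h1 : (inner ℝ (Y) (Y) : ℝ) = ∑ i, c i ^ 2 := by
      conv_lhs => rw [← hrepr]
      rw [inner_sum]
      refine Finset.sum_congr rfl fun i _ => ?_
      rw [real_inner_smul_right, hrepr, hci]; ring
    have h2 : (inner ℝ (Y) (Y) : ℝ) = ∑ i, y i ^ 2 := by
      rw [hinner]; simp [hY, dotProduct, pow_two]
    rw [← h1, ← h2]
  have hAy : A.mulVec y = ∑ i, (c i * hA.eigenvalues i) • (b i : Fin n → ℝ) := by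
    have h0 : (Y : Fin n → ℝ) = y := rfl
    conv_lhs => rw [← h0, ← hrepr]
    rw [show ((∑ i, c i • (b i : EuclideanSpace ℝ (Fin n)) : EuclideanSpace ℝ (Fin n)) : Fin n → ℝ)
        = ∑ i, c i • ((b i : EuclideanSpace ℝ (Fin n)) : Fin n → ℝ) by
        rw [WithLp.ofLp_sum]; rfl]
    rw [show A.mulVec (∑ i, c i • ((b i : EuclideanSpace ℝ (Fin n)) : Fin n → ℝ))
        = ∑ i, A.mulVec (c i • ((b i : EuclideanSpace ℝ (Fin n)) : Fin n → ℝ)) from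
      map_sum A.mulVecLin _ _]
    refine Finset.sum_congr rfl fun i _ => ?_
    rw [Matrix.mulVec_smul,
      show (A.mulVec ((b i : EuclideanSpace ℝ (Fin n)) : Fin n → ℝ))
          = hA.eigenvalues i • ((b i : EuclideanSpace ℝ (Fin n)) : Fin n → ℝ) from
        hA.mulVec_eigenvectorBasis i,
      smul_smul, mul_comm]
  have key : y ⬝ᵥ A.mulVec y = ∑ i, hA.eigenvalues i * c i ^ 2 := by
    rw [hAy]
    rw [show y ⬝ᵥ (∑ i, (c i * hA.eigenvalues i) • (b i : Fin n → ℝ))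
        = ∑ i, (c i * hA.eigenvalues i) * (y ⬝ᵥ (b i : Fin n → ℝ)) by
      simp only [dotProduct, Finset.sum_apply, Pi.smul_apply, smul_eq_mul, Finset.mul_sum]
      rw [Finset.sum_comm]
      refine Finset.sum_congr rfl fun i _ => Finset.sum_congr rfl fun j _ => ?_
      show y j * ((c i * hA.eigenvalues i) * (b i : Fin n → ℝ) j) = _
      ring]
    refine Finset.sum_congr rfl fun i _ => ?_
    rw [← hinner, hci]; ring
  rw [key, hnorm, Finset.mul_sum]
  refine Finset.sum_le_sum fun i _ => ?_
  nlinarith [hle i, sq_nonneg (c i)]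

/-- If `A` is an `n × n` real positive definite matrix with smallest
eigenvalue `lam`, then for every vector `y` with `‖y‖_∞ = 1`,
`‖A y‖_∞ ≥ 2 lam / (√n + 1)`.  The Pi norm on `Fin n → ℝ` is the sup norm. -/
theorem stmt_0 {n : ℕ} (hn : 1 ≤ n) (A : Matrix (Fin n) (Fin n) ℝ) (hA : A.PosDef)
    (lam : ℝ) (hle : ∀ i, lam ≤ hA.1.eigenvalues i) (hex : ∃ i, hA.1.eigenvalues i = lam)
    (y : Fin n → ℝ) (hy : ‖y‖ = 1) :
    2 * lam / (Real.sqrt n + 1) ≤ ‖A.mulVec y‖ := by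
  classical
  have hlam : 0 < lam := by
    obtain ⟨i, hi⟩ := hex
    rw [← hi]; exact hA.eigenvalues_pos i
  set r : ℝ := Real.sqrt n with hrdef
  have hr2 : r ^ 2 = n := Real.sq_sqrt (Nat.cast_nonneg n)
  have hr1 : 1 ≤ r := by
    rw [hrdef]
    rw [show (1:ℝ) = Real.sqrt 1 by simp]
    exact Real.sqrt_le_sqrt (by exact_mod_cast hn)
  have hrpos : 0 < r + 1 := by linarith
  set s : ℝ := ‖A.mulVec y‖ with hsdef
  have hyle : ∀ i, |y i| ≤ 1 := fun i => by
    rw [← hy, ← Real.norm_eq_abs]; exact norm_le_pi_norm y i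
  have hzle : ∀ i, |A.mulVec y i| ≤ s := fun i => by
    rw [← Real.norm_eq_abs]; exact norm_le_pi_norm (A.mulVec y) i
  -- an index attaining the sup norm
  have hne : (Finset.univ : Finset (Fin n)).Nonempty := by
    have : Nonempty (Fin n) := ⟨⟨0, hn⟩⟩
    exact Finset.univ_nonempty
  obtain ⟨i0, -, hi0⟩ := Finset.exists_mem_eq_sup (Finset.univ : Finset (Fin n)) hne
    (fun i => ‖y i‖₊)
  have hyi0 : |y i0| = 1 := by
    have : ‖y‖₊ = ‖y i0‖₊ := by rw [Pi.nnnorm_def, hi0]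
    have h1 : ‖y‖ = ‖y i0‖ := by
      rw [← coe_nnnorm, ← coe_nnnorm, this]
    rw [← Real.norm_eq_abs, ← h1, hy]
  set L1 : ℝ := ∑ i, |y i| with hL1def
  have hL1 : 1 ≤ L1 := by
    rw [hL1def, ← hyi0]
    exact Finset.single_le_sum (f := fun i => |y i|) (fun i _ => abs_nonneg _)
      (Finset.mem_univ i0)
  -- dot product upper bound
  have hdot : dotProduct y (A.mulVec y) ≤ L1 * s := by
    rw [dotProduct, hL1def, Finset.sum_mul]
    refine Finset.sum_le_sum fun i _ => ?_
    calc y i * A.mulVec y i ≤ |y i * A.mulVec y i| := le_abs_self _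
      _ = |y i| * |A.mulVec y i| := abs_mul _ _
      _ ≤ |y i| * s := by
          exact mul_le_mul_of_nonneg_left (hzle i) (abs_nonneg _)
  -- key combinatorial inequality : 2 * L1 ≤ (r+1) * ∑ y i ^ 2
  have hkey : 2 * L1 ≤ (r + 1) * ∑ i, y i ^ 2 := by
    have hpt : ∀ i, 0 ≤ (r + 1) * y i ^ 2 - 2 * |y i| + 1 / (r + 1) := by
      intro i
      have h := div_nonneg (sq_nonneg ((r + 1) * |y i| - 1)) (le_of_lt hrpos)
      have heq : ((r + 1) * |y i| - 1) ^ 2 / (r + 1)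
          = (r + 1) * y i ^ 2 - 2 * |y i| + 1 / (r + 1) := by
        field_simp
        rw [show ((r + 1) * |y i| - 1) ^ 2
            = (r + 1) ^ 2 * |y i| ^ 2 - 2 * ((r + 1) * |y i|) + 1 by ring, sq_abs]
        ring
      linarith [heq ▸ h]
    have hy2 : y i0 ^ 2 = 1 := by rw [← sq_abs, hyi0]; norm_num
    have hsum : ((r + 1) * y i0 ^ 2 - 2 * |y i0| + 1 / (r + 1))
        ≤ ∑ i, ((r + 1) * y i ^ 2 - 2 * |y i| + 1 / (r + 1)) :=
      Finset.single_le_sum (f := fun i => (r + 1) * y i ^ 2 - 2 * |y i| + 1 / (r + 1))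
        (fun i _ => hpt i) (Finset.mem_univ i0)
    have hexp : ∑ i, ((r + 1) * y i ^ 2 - 2 * |y i| + 1 / (r + 1))
        = (r + 1) * (∑ i, y i ^ 2) - 2 * L1 + n * (1 / (r + 1)) := by
      rw [Finset.sum_add_distrib, Finset.sum_sub_distrib, ← Finset.mul_sum, ← Finset.mul_sum]
      simp [Finset.card_univ, hL1def]
    have hdiv : (n : ℝ) * (1 / (r + 1)) - 1 / (r + 1) = r - 1 := by
      rw [← hr2]
      field_simp
      ring
    rw [hy2, hyi0] at hsum
    rw [hexp] at hsum
    linarith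
  -- conclude
  have hray := rayleigh_low A hA.1 lam hle y
  rw [div_le_iff₀ hrpos]
  have c1 : 2 * lam * L1 ≤ (r + 1) * (lam * ∑ i, y i ^ 2) := by
    calc 2 * lam * L1 = lam * (2 * L1) := by ring
      _ ≤ lam * ((r + 1) * ∑ i, y i ^ 2) := by
          exact mul_le_mul_of_nonneg_left hkey (le_of_lt hlam)
      _ = (r + 1) * (lam * ∑ i, y i ^ 2) := by ring
  have c2 : (r + 1) * (lam * ∑ i, y i ^ 2) ≤ (r + 1) * (L1 * s) := by
    refine mul_le_mul_of_nonneg_left (le_trans hray hdot) (le_of_lt hrpos)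
  have c3 : 2 * lam * L1 ≤ (r + 1) * s * L1 := by
    calc 2 * lam * L1 ≤ (r + 1) * (L1 * s) := le_trans c1 c2
      _ = (r + 1) * s * L1 := by ring
  have := le_of_mul_le_mul_right (by linarith [c3] : 2 * lam * L1 ≤ s * (r + 1) * L1)
    (lt_of_lt_of_le one_pos hL1)
  linarith
end

section
/- If $A$ is an $n\times n$ real positive definite matrix with smallest eigenvalue $\lambda_{\min}$, then the operator norm of $A^{-1}$ with respect to the $\ell_\infty$ norm satisfies $\|A^{-1}\|_\infty \leq \frac{\sqrt{n}+1}{2\lambda_{\min}}$. -/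
/-- The operator norm of the linear map `z ↦ A z` on `Fin n → ℝ`, where the
Pi norm on `Fin n → ℝ` is the sup (ℓ∞) norm; hence this is the ℓ∞-induced
operator norm of the matrix `A`. -/
noncomputable def matOpNormInf {m n : ℕ} (A : Matrix (Fin m) (Fin n) ℝ) : ℝ :=
  ‖LinearMap.toContinuousLinearMap A.mulVecLin‖

lemma psd_diag_nonneg {n : ℕ} {D : Matrix (Fin n) (Fin n) ℝ} (hD : D.PosSemidef) (i : Fin n) :
    0 ≤ D i i := by
  exact hD.diag_nonneg

/-- `A - lam • 1` is positive semidefinite when all eigenvalues of `A` are at least `lam`. -/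
lemma sub_smul_one_posSemidef {n : ℕ} {A : Matrix (Fin n) (Fin n) ℝ} (hA : A.IsHermitian)
    {lam : ℝ} (hle : ∀ i, lam ≤ hA.eigenvalues i) :
    (A - lam • 1).PosSemidef := by
  set U : Matrix (Fin n) (Fin n) ℝ := (hA.eigenvectorUnitary : Matrix (Fin n) (Fin n) ℝ)
  have hU : U * star U = 1 := (Matrix.mem_unitaryGroup_iff).mp hA.eigenvectorUnitary.2
  have key : A - lam • 1 = U * Matrix.diagonal (fun i => hA.eigenvalues i - lam) * star U := by
    have h1 : U * Matrix.diagonal (fun _ : Fin n => lam) * star U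
        = lam • (1 : Matrix (Fin n) (Fin n) ℝ) := by
      rw [← Matrix.smul_one_eq_diagonal, Matrix.mul_smul, mul_one, Matrix.smul_mul, hU]
    conv_lhs => rw [hA.spectral_theorem, ← h1]
    rw [Unitary.conjStarAlgAut_apply]
    rw [← Matrix.sub_mul, ← Matrix.mul_sub, Matrix.diagonal_sub]
    congr 1
  rw [key]
  have hd : (Matrix.diagonal (fun i => hA.eigenvalues i - lam)).PosSemidef :=
    Matrix.posSemidef_diagonal_iff.mpr (fun i => sub_nonneg.mpr (hle i))
  have := hd.mul_mul_conjTranspose_same U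
  simpa [Matrix.star_eq_conjTranspose] using this

/-- If `A` is an `n × n` real positive definite matrix with smallest
eigenvalue `lam`, then `‖A⁻¹‖_∞ ≤ (√n + 1) / (2 lam)`. -/
theorem stmt_1 {n : ℕ} (hn : 1 ≤ n) (A : Matrix (Fin n) (Fin n) ℝ) (hA : A.PosDef)
    (lam : ℝ) (hle : ∀ i, lam ≤ hA.1.eigenvalues i) (hex : ∃ i, hA.1.eigenvalues i = lam) :
    matOpNormInf A⁻¹ ≤ (Real.sqrt n + 1) / (2 * lam) := by
  -- positivity of lam
  obtain ⟨i0, hi0⟩ := hex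
  have hlam : 0 < lam := hi0 ▸ hA.eigenvalues_pos i0
  set B := A⁻¹ with hBdef
  have hB : B.PosDef := hA.inv
  have hBH : B.IsHermitian := hB.1
  have hBsymm : ∀ i j, B j i = B i j := by
    intro i j
    conv_lhs => rw [← hBH.eq]
    simp [Matrix.conjTranspose_apply]
  have hBA : B * A = 1 := Matrix.nonsing_inv_mul A hA.det_pos.ne'.isUnit
  -- key positive semidefiniteness
  have hsub : (A - lam • 1).PosSemidef := sub_smul_one_posSemidef hA.1 hle
  have hkey : (B - lam • (B * B)).PosSemidef := by
    have h := hsub.mul_mul_conjTranspose_same B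
    have hBct : B.conjTranspose = B := hBH.eq
    have : B * (A - lam • 1) * B.conjTranspose = B - lam • (B * B) := by
      rw [hBct, Matrix.mul_sub, Matrix.sub_mul, Matrix.mul_smul, Matrix.smul_mul, mul_one,
        mul_assoc, ← mul_assoc B A B, hBA, one_mul]
    rwa [this] at h
  set s := Real.sqrt n with hsdef
  have hs1 : 1 ≤ s := by
    rw [hsdef]
    rw [show (1:ℝ) = Real.sqrt 1 by simp]
    exact Real.sqrt_le_sqrt (by exact_mod_cast hn)
  have hs2 : s ^ 2 = (n : ℝ) := Real.sq_sqrt (Nat.cast_nonneg n)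
  set M := lam⁻¹ with hMdef
  have hM0 : 0 < M := inv_pos.mpr hlam
  -- row sum bound
  have hrow : ∀ i, ∑ j, |B i j| ≤ (s + 1) * M / 2 := by
    intro i
    set t := B i i with htdef
    set S := ∑ j ∈ Finset.univ.erase i, (B i j) ^ 2 with hSdef
    set u := ∑ j ∈ Finset.univ.erase i, |B i j| with hudef
    have ht0 : 0 ≤ t := psd_diag_nonneg hB.posSemidef i
    have hSnn : 0 ≤ S := Finset.sum_nonneg fun j _ => sq_nonneg _
    have hu0 : 0 ≤ u := Finset.sum_nonneg fun j _ => abs_nonneg _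
    -- (B*B) i i = t^2 + S
    have hBB : (B * B) i i = t ^ 2 + S := by
      rw [Matrix.mul_apply]
      have : ∀ j, B i j * B j i = (B i j) ^ 2 := fun j => by rw [hBsymm i j]; ring
      simp_rw [this]
      rw [← Finset.sum_erase_add _ _ (Finset.mem_univ i)]
      ring
    -- lam * (t^2 + S) ≤ t
    have hdiag : lam * (t ^ 2 + S) ≤ t := by
      have h := psd_diag_nonneg hkey i
      have : (B - lam • (B * B)) i i = t - lam * ((B * B) i i) := by
        simp [Matrix.sub_apply, Matrix.smul_apply, htdef]
      rw [this, hBB] at h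
      linarith
    have hMt : t ^ 2 + S ≤ M * t := by
      rw [hMdef]
      rw [inv_mul_eq_div, le_div_iff₀ hlam]
      linarith [hdiag]
    have htM : t ≤ M := by nlinarith
    -- Cauchy-Schwarz on off-diagonal terms
    have hu2 : u ^ 2 ≤ ((n : ℝ) - 1) * S := by
      have hcs := sq_sum_le_card_mul_sum_sq (s := Finset.univ.erase i)
        (f := fun j => |B i j|)
      have hcard : (Finset.univ.erase i).card = n - 1 := by
        rw [Finset.card_erase_of_mem (Finset.mem_univ i), Finset.card_univ, Fintype.card_fin]
      have habs : ∀ j, |B i j| ^ 2 = (B i j) ^ 2 := fun j => sq_abs _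
      simp_rw [habs] at hcs
      rw [hcard] at hcs
      have : ((n - 1 : ℕ) : ℝ) = (n : ℝ) - 1 := by
        rw [Nat.cast_sub hn]; simp
      calc u ^ 2 ≤ ((n - 1 : ℕ) : ℝ) * S := by exact_mod_cast hcs
        _ = ((n : ℝ) - 1) * S := by rw [this]
    have hu2' : u ^ 2 ≤ (s ^ 2 - 1) * (M * t - t ^ 2) := by
      rw [hs2]
      have h1 : ((n:ℝ) - 1) * S ≤ ((n:ℝ) - 1) * (M * t - t ^ 2) := by
        apply mul_le_mul_of_nonneg_left _ (by nlinarith : (0:ℝ) ≤ (n:ℝ) - 1)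
        linarith
      linarith
    have h1 : u ^ 2 ≤ ((s + 1) * M / 2 - t) ^ 2 := by
      nlinarith [sq_nonneg (s * t - (s + 1) * M / 2)]
    have hRt : 0 ≤ (s + 1) * M / 2 - t := by nlinarith
    have h2 : u ≤ (s + 1) * M / 2 - t := by nlinarith
    -- assemble row sum
    have hsum : ∑ j, |B i j| = u + |t| := by
      rw [hudef, Finset.sum_erase_add _ _ (Finset.mem_univ i)]
    rw [hsum, abs_of_nonneg ht0]
    linarith
  -- operator norm bound
  have hC0 : 0 ≤ (s + 1) * M / 2 := by positivity
  have hgoal : matOpNormInf B ≤ (s + 1) * M / 2 := by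
    rw [matOpNormInf]
    apply ContinuousLinearMap.opNorm_le_bound _ hC0
    intro z
    rw [show (LinearMap.toContinuousLinearMap B.mulVecLin) z = B.mulVec z from rfl]
    rw [pi_norm_le_iff_of_nonneg (by positivity)]
    intro i
    have : (B.mulVec z) i = ∑ j, B i j * z j := rfl
    rw [this]
    calc ‖∑ j, B i j * z j‖ ≤ ∑ j, |B i j * z j| := by
          simpa using Finset.abs_sum_le_sum_abs (fun j => B i j * z j) Finset.univ
      _ = ∑ j, |B i j| * |z j| := by simp_rw [abs_mul]
      _ ≤ ∑ j, |B i j| * ‖z‖ := by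
          apply Finset.sum_le_sum
          intro j _
          exact mul_le_mul_of_nonneg_left (norm_le_pi_norm z j) (abs_nonneg _)
      _ = (∑ j, |B i j|) * ‖z‖ := by rw [← Finset.sum_mul]
      _ ≤ (s + 1) * M / 2 * ‖z‖ := by
          apply mul_le_mul_of_nonneg_right (hrow i) (norm_nonneg z)
  have heq : (s + 1) * M / 2 = (s + 1) / (2 * lam) := by
    rw [hMdef, div_eq_mul_inv, div_eq_mul_inv, mul_inv]; ring
  rw [← heq]
  exact hgoal
end

section
/- For every integer $n \geq 2$ and every real $a \geq 0$, the function $f(a) = \frac{1+(n-1)a^2}{1+(n-1)a}$ satisfies $f(a) \geq \frac{2}{\sqrt{n}+1}$, with equality at $a = \frac{1}{\sqrt{n}+1}$. -/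
/-- For every integer `n ≥ 2` and every real `a ≥ 0`, the function
`f(a) = (1+(n-1)a²)/(1+(n-1)a)` satisfies `f(a) ≥ 2/(√n+1)`, with equality at
`a = 1/(√n+1)`. -/
theorem stmt_3 (n : ℕ) (hn : 2 ≤ n) (a : ℝ) (ha : 0 ≤ a) :
    2 / (Real.sqrt n + 1) ≤ (1 + ((n : ℝ) - 1) * a ^ 2) / (1 + ((n : ℝ) - 1) * a) ∧
    (1 + ((n : ℝ) - 1) * (1 / (Real.sqrt n + 1)) ^ 2)
        / (1 + ((n : ℝ) - 1) * (1 / (Real.sqrt n + 1)))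
      = 2 / (Real.sqrt n + 1) := by
  have hn1 : (1 : ℝ) ≤ (n : ℝ) := by exact_mod_cast Nat.one_le_of_lt hn
  have hnn : (0 : ℝ) ≤ (n : ℝ) := by positivity
  have hs : Real.sqrt n ^ 2 = n := Real.sq_sqrt hnn
  have hs1 : 1 ≤ Real.sqrt n := by
    rw [show (1:ℝ) = Real.sqrt 1 by simp]
    exact Real.sqrt_le_sqrt hn1
  have hsp : 0 < Real.sqrt n + 1 := by linarith
  have hd : 0 < 1 + ((n : ℝ) - 1) * a := by nlinarith
  constructor
  · rw [div_le_div_iff₀ hsp hd]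
    nlinarith [mul_nonneg (sub_nonneg.2 hs1) (sq_nonneg ((Real.sqrt n + 1) * a - 1))]
  · have hd2 : 0 < 1 + ((n : ℝ) - 1) * (1 / (Real.sqrt n + 1)) := by
      have : 0 < 1 / (Real.sqrt n + 1) := by positivity
      nlinarith
    rw [div_eq_div_iff (ne_of_gt hd2) (ne_of_gt hsp)]
    field_simp
    nlinarith [hs]
end

section
/- For every nonzero vector $y \in \mathbb{R}^n$ with $\|y\|_\infty = 1$, the ratio $\frac{\|y\|_2^2}{\|y\|_1}$ is at least $\frac{2}{\sqrt{n}+1}$. -/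
/-- For every vector `y ∈ ℝⁿ` with `‖y‖_∞ = 1` (the Pi norm on
`Fin n → ℝ` is the sup norm), the ratio `‖y‖₂² / ‖y‖₁` is at least `2/(√n+1)`. -/
theorem stmt_4 {n : ℕ} (hn : 1 ≤ n) (y : Fin n → ℝ) (hy : ‖y‖ = 1) :
    2 / (Real.sqrt n + 1) ≤ (∑ i, (y i) ^ 2) / (∑ i, |y i|) := by
  have hne : Nonempty (Fin n) := ⟨⟨0, hn⟩⟩
  obtain ⟨i₀, -, hi₀⟩ := Finset.exists_mem_eq_sup (Finset.univ : Finset (Fin n))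
    Finset.univ_nonempty (fun i => ‖y i‖₊)
  have hmax : |y i₀| = 1 := by
    have h : ‖y‖₊ = ‖y i₀‖₊ := by rw [Pi.nnnorm_def, hi₀]
    have h2 : ‖y‖ = ‖y i₀‖ := congrArg NNReal.toReal h
    rw [hy, Real.norm_eq_abs] at h2
    exact h2.symm
  set μ := 1 / (Real.sqrt n + 1) with hμ
  have hsn : 1 ≤ Real.sqrt n := by
    rw [show (1:ℝ) = Real.sqrt 1 by simp]
    exact Real.sqrt_le_sqrt (by exact_mod_cast hn)
  have hpos : 0 < Real.sqrt n + 1 := by linarith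
  have hμpos : 0 < μ := by positivity
  have hkey : (n : ℝ) * μ ^ 2 = (1 - μ) ^ 2 := by
    have h1 : 1 - μ = Real.sqrt n / (Real.sqrt n + 1) := by
      field_simp [hμ]
      rw [hμ, sub_mul, one_div, inv_mul_cancel₀ hpos.ne']; ring
    rw [h1, hμ, div_pow, div_pow, one_pow, Real.sq_sqrt (by positivity : (0:ℝ) ≤ (n:ℝ))]
    ring
  have hsum : (n : ℝ) * μ ^ 2 ≤ ∑ i, (|y i| - μ) ^ 2 := by
    calc (n:ℝ) * μ^2 = (1 - μ)^2 := hkey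
    _ = (|y i₀| - μ)^2 := by rw [hmax]
    _ ≤ ∑ i, (|y i| - μ)^2 :=
        Finset.single_le_sum (f := fun i => (|y i| - μ)^2) (fun i _ => sq_nonneg _) (Finset.mem_univ i₀)
  have hexp : ∑ i, (|y i| - μ)^2
      = ∑ i, (y i)^2 - 2*μ*(∑ i, |y i|) + n*μ^2 := by
    have h : ∀ i ∈ Finset.univ, (|y i| - μ)^2 = (y i)^2 - 2*μ*|y i| + μ^2 := fun i _ => by
      rw [← sq_abs (y i)]; ring
    rw [Finset.sum_congr rfl h, Finset.sum_add_distrib, Finset.sum_sub_distrib,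
      ← Finset.mul_sum, Finset.sum_const, Finset.card_univ, Fintype.card_fin, nsmul_eq_mul]
  have hS2 : 2*μ*(∑ i, |y i|) ≤ ∑ i, (y i)^2 := by
    rw [hexp] at hsum; linarith
  have hS1 : (1:ℝ) ≤ ∑ i, |y i| := by
    calc (1:ℝ) = |y i₀| := hmax.symm
    _ ≤ ∑ i, |y i| := Finset.single_le_sum (f := fun i => |y i|) (fun i _ => abs_nonneg _) (Finset.mem_univ i₀)
  rw [div_le_div_iff₀ hpos (by linarith)]
  have hμmul : μ * (Real.sqrt n + 1) = 1 := by
    rw [hμ]; field_simp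
  nlinarith [hS2, hS1, hμmul, hpos]
end

section
/- If $A = I + B$ with $B$ an $n\times n$ positive semidefinite symmetric real matrix, then $\|A^{-1}\|_\infty \leq \frac{\sqrt{n}+1}{2}$, where $\|\cdot\|_\infty$ is the operator norm induced by the $\ell_\infty$ vector norm. -/
open Matrix Finset

/-- If `A = I + B` with `B` an `n × n` positive semidefinite symmetric
real matrix, then `‖A⁻¹‖_∞ ≤ (√n + 1)/2`. -/
theorem stmt_6 {n : ℕ} (B : Matrix (Fin n) (Fin n) ℝ) (hB : B.PosSemidef) :
    matOpNormInf (1 + B)⁻¹ ≤ (Real.sqrt n + 1) / 2 := by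
  set A : Matrix (Fin n) (Fin n) ℝ := 1 + B with hA_def
  have hA : A.PosDef := Matrix.PosDef.one.add_posSemidef hB
  have hdet : IsUnit A.det := isUnit_iff_ne_zero.mpr hA.det_pos.ne'
  set C : Matrix (Fin n) (Fin n) ℝ := A⁻¹ with hC_def
  have hAC : A * C = 1 := Matrix.mul_nonsing_inv A hdet
  have hBsymm : Bᵀ = B := by
    have := hB.isHermitian; simpa [Matrix.IsHermitian] using this
  have hAsymm : Aᵀ = A := by
    rw [hA_def, Matrix.transpose_add, Matrix.transpose_one, hBsymm]
  have hCsymm : Cᵀ = C := by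
    rw [hC_def, Matrix.transpose_nonsing_inv, hAsymm]
  -- row sum bound
  have hrow : ∀ i : Fin n, ∑ j, |C i j| ≤ (Real.sqrt n + 1) / 2 := by
    intro i
    set y : Fin n → ℝ := C.mulVec (Pi.single i 1) with hy_def
    have hy : ∀ j, y j = C i j := by
      intro j
      have h1 : y j = C j i := by simp [hy_def, Matrix.mulVec_single]
      rw [h1, ← Matrix.transpose_apply C i j, hCsymm]
    have hxy : A.mulVec y = Pi.single i 1 := by
      rw [hy_def, Matrix.mulVec_mulVec, hAC, Matrix.one_mulVec]
    have hkey : y ⬝ᵥ y ≤ y i := by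
      have hby : B.mulVec y = Pi.single i 1 - y := by
        rw [← hxy, hA_def, Matrix.add_mulVec, Matrix.one_mulVec]; abel
      have h1 : (B.mulVec y) ⬝ᵥ y = Pi.single i 1 ⬝ᵥ y - y ⬝ᵥ y := by
        rw [hby, sub_dotProduct]
      have h2 : 0 ≤ (B.mulVec y) ⬝ᵥ y := by
        have := hB.dotProduct_mulVec_nonneg y
        simpa [dotProduct_comm] using this
      have h3 : Pi.single i 1 ⬝ᵥ y = y i := by
        rw [single_dotProduct, one_mul]
      rw [h1, h3] at h2; linarith
    set t : ℝ := C i i with ht_def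
    have hSt : ∑ j, (C i j)^2 ≤ t := by
      have h4 : y ⬝ᵥ y = ∑ j, (C i j)^2 := by
        simp [dotProduct, hy, sq]
      rw [← h4, ht_def, ← hy i]; exact hkey
    have ht2 : t^2 ≤ t :=
      le_trans (le_trans (le_of_eq rfl) (Finset.single_le_sum
        (f := fun j => (C i j)^2) (fun j _ => sq_nonneg _) (Finset.mem_univ i))) hSt
    have ht0 : 0 ≤ t := by nlinarith
    set r : ℝ := ∑ j ∈ Finset.univ.erase i, |C i j| with hr_def
    have hr0 : 0 ≤ r := Finset.sum_nonneg fun j _ => abs_nonneg _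
    have hsplit : ∑ j, |C i j| = t + r := by
      rw [hr_def, ← Finset.add_sum_erase _ _ (Finset.mem_univ i), abs_of_nonneg ht0]
    have hn1 : 1 ≤ n := i.pos
    have hcard : (((Finset.univ.erase i).card : ℕ) : ℝ) = (n : ℝ) - 1 := by
      rw [Finset.card_erase_of_mem (Finset.mem_univ i), Finset.card_univ, Fintype.card_fin]
      push_cast [hn1]; ring
    have hCS : r^2 ≤ ((n:ℝ) - 1) * (t - t^2) := by
      have h5 : r^2 ≤ (((Finset.univ.erase i).card : ℕ) : ℝ) *
          ∑ j ∈ Finset.univ.erase i, |C i j|^2 := by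
        exact_mod_cast sq_sum_le_card_mul_sum_sq (s := Finset.univ.erase i)
          (f := fun j => |C i j|)
      have h6 : ∑ j ∈ Finset.univ.erase i, |C i j|^2 = (∑ j, (C i j)^2) - t^2 := by
        have h7 : ∑ j, (C i j)^2 = (C i i)^2 + ∑ j ∈ Finset.univ.erase i, (C i j)^2 :=
          (Finset.add_sum_erase _ _ (Finset.mem_univ i)).symm
        simp only [sq_abs]; rw [h7, ht_def]; ring
      rw [h6, hcard] at h5
      have h8 : (0:ℝ) ≤ (n:ℝ) - 1 := by
        have : (1:ℝ) ≤ (n:ℝ) := by exact_mod_cast hn1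
        linarith
      nlinarith [hSt]
    -- final scalar inequality
    set s : ℝ := Real.sqrt n with hs_def
    have hs1 : 1 ≤ s := by
      rw [hs_def]
      rw [show (1:ℝ) = Real.sqrt 1 from (Real.sqrt_one).symm]
      exact Real.sqrt_le_sqrt (by exact_mod_cast hn1)
    have hsq : s^2 = (n:ℝ) := Real.sq_sqrt (by positivity)
    have hr2 : r^2 ≤ (s^2 - 1) * (t - t^2) := by rw [hsq]; exact hCS
    have h1 : (2*r)^2 ≤ (s - (2*t-1))^2 := by nlinarith [sq_nonneg (s*(2*t-1) - 1)]
    have h2 : 0 ≤ s - (2*t-1) := by nlinarith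
    rw [hsplit]
    nlinarith [h1, h2, hr0]
  -- operator norm bound
  unfold matOpNormInf
  refine ContinuousLinearMap.opNorm_le_bound _ (by positivity) fun x => ?_
  have hcoe : (LinearMap.toContinuousLinearMap C.mulVecLin) x = C.mulVec x := by
    simp [Matrix.mulVecLin_apply]
  rw [hcoe, pi_norm_le_iff_of_nonneg (by positivity)]
  intro j
  calc ‖(C.mulVec x) j‖ = |∑ k, C j k * x k| := by
        simp [Matrix.mulVec, dotProduct, Real.norm_eq_abs]
    _ ≤ ∑ k, |C j k * x k| := Finset.abs_sum_le_sum_abs _ _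
    _ = ∑ k, |C j k| * |x k| := by simp [abs_mul]
    _ ≤ ∑ k, |C j k| * ‖x‖ := Finset.sum_le_sum fun k _ =>
        mul_le_mul_of_nonneg_left (norm_le_pi_norm x k) (abs_nonneg _)
    _ = (∑ k, |C j k|) * ‖x‖ := (Finset.sum_mul _ _ _).symm
    _ ≤ (Real.sqrt n + 1) / 2 * ‖x‖ :=
        mul_le_mul_of_nonneg_right (hrow j) (norm_nonneg x)
end

section
/- Let $A$ be a positive definite $n\times n$ matrix and $b \in \mathbb{R}^n$. If $x^*$ solves $A x = b$ and $\bar{x}$ solves $A\bar{x} = b + e$ for some perturbation vector $e$, then $\|\bar{x} - x^*\|_\infty \leq \|A^{-1}\|_\infty \, \|e\|_\infty \leq \frac{\sqrt{n}+1}{2\lambda_{\min}} \|e\|_\infty$, where $\lambda_{\min}$ is the smallest eigenvalue of $A$. -/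
open Matrix

-- aux: pure real inequality
lemma aux_ineq (nn : ℕ) (hn : 1 ≤ nn) (lam t Q rest : ℝ) (hlam : 0 < lam)
    (hQ : 0 ≤ Q) (hrest : 0 ≤ rest) (hsum : lam * (t^2 + Q) ≤ t)
    (hcs : rest^2 ≤ ((nn:ℝ) - 1) * Q) :
    t + rest ≤ (Real.sqrt nn + 1) / (2 * lam) := by
  have ht : 0 ≤ t := le_trans (by positivity) hsum
  have hs : (Real.sqrt nn)^2 = nn := Real.sq_sqrt (by positivity)
  have hs1 : 1 ≤ Real.sqrt nn := by
    rw [show (1:ℝ) = Real.sqrt 1 by simp]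
    exact Real.sqrt_le_sqrt (by exact_mod_cast hn)
  have hnn : (1:ℝ) ≤ (nn:ℝ) := by exact_mod_cast hn
  rw [le_div_iff₀ (by positivity)]
  -- a = lam * t, R = lam * rest
  have ha1 : lam * t ≤ 1 := by nlinarith [sq_nonneg (lam*t - 1), mul_pos hlam hlam]
  -- R² ≤ (n-1)(a - a²)
  have hR : (lam*rest)^2 ≤ ((nn:ℝ) - 1) * (lam*t - (lam*t)^2) := by
    have h0 : lam^2 * Q ≤ lam*t - (lam*t)^2 := by nlinarith
    nlinarith [mul_le_mul_of_nonneg_left hcs (le_of_lt (mul_pos hlam hlam)),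
      mul_le_mul_of_nonneg_left h0 (by linarith : (0:ℝ) ≤ (nn:ℝ) - 1)]
  nlinarith [sq_nonneg (2*Real.sqrt nn * (lam*t) - Real.sqrt nn - 1),
    mul_nonneg hlam.le hrest, mul_nonneg hlam.le ht,
    sq_nonneg (Real.sqrt nn + 1 - 2*lam*t - 2*lam*rest),
    sq_nonneg (Real.sqrt nn + 1 - 2*lam*t + 2*lam*rest)]

-- A ⪰ lam • 1
lemma dot_le {n : ℕ} (A : Matrix (Fin n) (Fin n) ℝ) (hA : A.PosDef) (lam : ℝ)
    (hle : ∀ i, lam ≤ hA.1.eigenvalues i) (y : Fin n → ℝ) :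
    lam * (y ⬝ᵥ y) ≤ y ⬝ᵥ (A *ᵥ y) := by
  set U : Matrix (Fin n) (Fin n) ℝ := (hA.1.eigenvectorUnitary : Matrix (Fin n) (Fin n) ℝ)
  have hUU : U * star U = 1 := (Matrix.mem_unitaryGroup_iff).mp hA.1.eigenvectorUnitary.2
  have hd : (Matrix.diagonal (fun i => hA.1.eigenvalues i - lam)).PosSemidef :=
    Matrix.PosSemidef.diagonal (fun i => sub_nonneg.2 (hle i))
  have hps : (A - lam • 1).PosSemidef := by
    have h2 := hd.mul_mul_conjTranspose_same U
    have he : U * Matrix.diagonal (fun i => hA.1.eigenvalues i - lam) * Uᴴ = A - lam • 1 := by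
      have hdiag : Matrix.diagonal (fun i => hA.1.eigenvalues i - lam)
          = Matrix.diagonal (RCLike.ofReal ∘ hA.1.eigenvalues) - lam • (1 : Matrix (Fin n) (Fin n) ℝ) := by
        ext i j
        by_cases h : i = j <;> simp [h, Matrix.diagonal, Matrix.one_apply]
      rw [hdiag, Matrix.mul_sub, Matrix.sub_mul, ← Matrix.star_eq_conjTranspose U,
        ← (show A = U * Matrix.diagonal (RCLike.ofReal ∘ hA.1.eigenvalues) * star U from hA.1.spectral_theorem), Matrix.mul_smul, Matrix.smul_mul, Matrix.mul_one, hUU]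
    rwa [he] at h2
  have h3 := hps.dotProduct_mulVec_nonneg y
  simp only [Matrix.sub_mulVec, Matrix.smul_mulVec, Matrix.one_mulVec, dotProduct_sub,
    dotProduct_smul, star_trivial, smul_eq_mul] at h3
  linarith

/-- Let `A` be a positive definite `n × n` real matrix with smallest
eigenvalue `lam` and `b ∈ ℝⁿ`. If `A x* = b` and `A x̄ = b + e`, then
`‖x̄ - x*‖_∞ ≤ ‖A⁻¹‖_∞ ‖e‖_∞ ≤ ((√n + 1)/(2 lam)) ‖e‖_∞`. -/
theorem stmt_12 {n : ℕ} (hn : 1 ≤ n) (A : Matrix (Fin n) (Fin n) ℝ) (hA : A.PosDef)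
    (lam : ℝ) (hle : ∀ i, lam ≤ hA.1.eigenvalues i) (hex : ∃ i, hA.1.eigenvalues i = lam)
    (b e xstar xbar : Fin n → ℝ)
    (hxstar : A.mulVec xstar = b) (hxbar : A.mulVec xbar = b + e) :
    ‖xbar - xstar‖ ≤ matOpNormInf A⁻¹ * ‖e‖ ∧
    matOpNormInf A⁻¹ * ‖e‖ ≤ (Real.sqrt n + 1) / (2 * lam) * ‖e‖ := by
  obtain ⟨i0, hi0⟩ := hex
  have hlam : 0 < lam := hi0 ▸ hA.eigenvalues_pos i0
  set M := A⁻¹ with hM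
  have hdet : IsUnit A.det := hA.det_pos.ne'.isUnit
  have hAM : A * M = 1 := Matrix.mul_nonsing_inv A hdet
  have hMA : M * A = 1 := Matrix.nonsing_inv_mul A hdet
  have hMh : M.IsHermitian := hA.1.inv
  have hsym : ∀ i j, M i j = M j i := by
    intro i j
    have := congrFun (congrFun hMh j) i
    simpa [Matrix.conjTranspose_apply] using this
  -- row sum bound
  have hrow : ∀ i, ∑ j, |M i j| ≤ (Real.sqrt n + 1) / (2 * lam) := by
    intro i
    set t := M i i with htdef
    set Q := ∑ j ∈ ({i}ᶜ : Finset (Fin n)), (M j i)^2 with hQdef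
    set rest := ∑ j ∈ ({i}ᶜ : Finset (Fin n)), |M j i| with hrestdef
    have hcol : (M *ᵥ Pi.single i 1) = fun j => M j i := by
      funext j; simp [Matrix.mulVec_single]
    have hkey := dot_le A hA lam hle (M *ᵥ Pi.single i 1)
    rw [hcol] at hkey
    have hAv : A *ᵥ (fun j => M j i) = Pi.single i 1 := by
      rw [← hcol, Matrix.mulVec_mulVec, hAM, Matrix.one_mulVec]
    rw [hAv] at hkey
    have h1 : (fun j => M j i) ⬝ᵥ Pi.single i 1 = t := by
      simp [dotProduct_single, htdef]
    have h2 : (fun j => M j i) ⬝ᵥ (fun j => M j i) = t^2 + Q := by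
      simp only [dotProduct, ← sq]
      rw [← Finset.sum_compl_add_sum {i} (fun j => (M j i)^2), Finset.sum_singleton, add_comm]
    rw [h1, h2] at hkey
    have hQ : 0 ≤ Q := Finset.sum_nonneg (fun _ _ => sq_nonneg _)
    have hrest : 0 ≤ rest := Finset.sum_nonneg (fun _ _ => abs_nonneg _)
    have hcs : rest^2 ≤ ((n:ℝ) - 1) * Q := by
      have := sq_sum_le_card_mul_sum_sq (s := ({i}ᶜ : Finset (Fin n))) (f := fun j => |M j i|)
      have hcard : ((({i}ᶜ : Finset (Fin n)).card : ℝ)) = (n:ℝ) - 1 := by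
        rw [Finset.card_compl, Finset.card_singleton, Fintype.card_fin]
        rw [Nat.cast_sub hn]; simp
      simpa [hcard, sq_abs] using this
    have ht : 0 ≤ t := le_trans (by positivity) hkey
    have := aux_ineq n hn lam t Q rest hlam hQ hrest hkey hcs
    calc ∑ j, |M i j| = ∑ j, |M j i| := by
          apply Finset.sum_congr rfl; intro j _; rw [hsym]
      _ = t + rest := by
          rw [← Finset.sum_compl_add_sum {i} (fun j => |M j i|), Finset.sum_singleton, add_comm,
            abs_of_nonneg ht]
      _ ≤ _ := this
  -- op norm bound
  have hople : matOpNormInf M ≤ (Real.sqrt n + 1) / (2 * lam) := by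
    apply ContinuousLinearMap.opNorm_le_bound _ (by positivity)
    intro x
    rw [pi_norm_le_iff_of_nonneg (by positivity)]
    intro i
    have : (LinearMap.toContinuousLinearMap M.mulVecLin) x = M *ᵥ x := rfl
    rw [this]
    have h1 : ‖(M *ᵥ x) i‖ ≤ ∑ j, |M i j| * ‖x‖ := by
      calc ‖(M *ᵥ x) i‖ = |∑ j, M i j * x j| := rfl
        _ ≤ ∑ j, |M i j * x j| := Finset.abs_sum_le_sum_abs _ _
        _ ≤ ∑ j, |M i j| * ‖x‖ := by
            apply Finset.sum_le_sum; intro j _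
            rw [abs_mul]
            exact mul_le_mul_of_nonneg_left (norm_le_pi_norm x j) (abs_nonneg _)
    calc ‖(M *ᵥ x) i‖ ≤ ∑ j, |M i j| * ‖x‖ := h1
      _ = (∑ j, |M i j|) * ‖x‖ := by rw [Finset.sum_mul]
      _ ≤ (Real.sqrt n + 1) / (2 * lam) * ‖x‖ :=
          mul_le_mul_of_nonneg_right (hrow i) (norm_nonneg x)
  constructor
  · have hdiff : xbar - xstar = M *ᵥ e := by
      have h1 : A *ᵥ (xbar - xstar) = e := by
        rw [Matrix.mulVec_sub, hxstar, hxbar]; abel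
      calc xbar - xstar = (M * A) *ᵥ (xbar - xstar) := by rw [hMA, Matrix.one_mulVec]
        _ = M *ᵥ e := by rw [← Matrix.mulVec_mulVec, h1]
    rw [hdiff]
    exact (LinearMap.toContinuousLinearMap M.mulVecLin).le_opNorm e
  · exact mul_le_mul_of_nonneg_right hople (norm_nonneg e)
end
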